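/- For the dragon curve coordinate functions with α ∈ (0, π/3): for all k ≥ 1, every l ≥ 1, and every 1 ≤ j ≤ 2^k, one has x_{k+l}(j/2^k) = x_k(j/2^k) and y_{k+l}(j/2^k) = y_k(j/2^k). In particular the dyadic values x_k(j/2^k) = f_{k,1} + ⋯ + f_{k,j} are fixed by all further refinements. -/

import Mathlib

open Real Filter

noncomputable def dragonAngle (α : ℝ) : ℕ → ℕ → ℝ
  | 0, _ => 0
  | k+1, i => dragonAngle α k (i / 2) + (if (i / 2) % 2 = i % 2 then α else -α)

noncomputable def fcoef (α : ℝ) (k i : ℕ) : ℝ :=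
  Real.cos (dragonAngle α k i) / (2 * Real.cos α) ^ k

noncomputable def gcoef (α : ℝ) (k i : ℕ) : ℝ :=
  Real.sin (dragonAngle α k i) / (2 * Real.cos α) ^ k

noncomputable def xfun (α : ℝ) (k : ℕ) (t : ℝ) : ℝ :=
  (∑ i ∈ Finset.range (min ⌊t * 2 ^ k⌋₊ (2 ^ k - 1)), fcoef α k i) +
    2 ^ k * fcoef α k (min ⌊t * 2 ^ k⌋₊ (2 ^ k - 1)) *
      (t - (min ⌊t * 2 ^ k⌋₊ (2 ^ k - 1) : ℕ) / 2 ^ k)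

noncomputable def yfun (α : ℝ) (k : ℕ) (t : ℝ) : ℝ :=
  (∑ i ∈ Finset.range (min ⌊t * 2 ^ k⌋₊ (2 ^ k - 1)), gcoef α k i) +
    2 ^ k * gcoef α k (min ⌊t * 2 ^ k⌋₊ (2 ^ k - 1)) *
      (t - (min ⌊t * 2 ^ k⌋₊ (2 ^ k - 1) : ℕ) / 2 ^ k)

-- key pairing identities
lemma fpair (α : ℝ) (hc : Real.cos α ≠ 0) (k i : ℕ) :
    fcoef α (k+1) (2*i) + fcoef α (k+1) (2*i+1) = fcoef α k i := by
  have h1 : (2*i) / 2 = i := by omega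
  have h2 : (2*i+1) / 2 = i := by omega
  have h3 : (2*i) % 2 = 0 := by omega
  have h4 : (2*i+1) % 2 = 1 := by omega
  simp only [fcoef, dragonAngle, h1, h2, h3, h4]
  rcases Nat.even_or_odd i with hi | hi
  · have : i % 2 = 0 := Nat.even_iff.mp hi
    simp only [this, if_pos rfl, if_neg (by omega : ¬ (0:ℕ) = 1), ↓reduceIte]
    rw [Real.cos_add, Real.cos_add, Real.cos_neg, Real.sin_neg]
    rw [pow_succ]
    field_simp
    ring
  · have : i % 2 = 1 := Nat.odd_iff.mp hi
    simp only [this, if_pos rfl, if_neg (by omega : ¬ (1:ℕ) = 0), ↓reduceIte]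
    rw [Real.cos_add, Real.cos_add, Real.cos_neg, Real.sin_neg]
    rw [pow_succ]
    field_simp
    ring

lemma gpair (α : ℝ) (hc : Real.cos α ≠ 0) (k i : ℕ) :
    gcoef α (k+1) (2*i) + gcoef α (k+1) (2*i+1) = gcoef α k i := by
  have h1 : (2*i) / 2 = i := by omega
  have h2 : (2*i+1) / 2 = i := by omega
  have h3 : (2*i) % 2 = 0 := by omega
  have h4 : (2*i+1) % 2 = 1 := by omega
  simp only [gcoef, dragonAngle, h1, h2, h3, h4]
  rcases Nat.even_or_odd i with hi | hi
  · have : i % 2 = 0 := Nat.even_iff.mp hi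
    simp only [this, if_pos rfl, if_neg (by omega : ¬ (0:ℕ) = 1), ↓reduceIte]
    rw [Real.sin_add, Real.sin_add, Real.cos_neg, Real.sin_neg]
    rw [pow_succ]
    field_simp
    ring
  · have : i % 2 = 1 := Nat.odd_iff.mp hi
    simp only [this, if_pos rfl, if_neg (by omega : ¬ (1:ℕ) = 0), ↓reduceIte]
    rw [Real.sin_add, Real.sin_add, Real.cos_neg, Real.sin_neg]
    rw [pow_succ]
    field_simp
    ring

lemma sum_double (c d : ℕ → ℝ) (h : ∀ i, d (2*i) + d (2*i+1) = c i) (j : ℕ) :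
    ∑ i ∈ Finset.range (2*j), d i = ∑ i ∈ Finset.range j, c i := by
  induction j with
  | zero => simp
  | succ n ih =>
    have : 2 * (n+1) = (2*n + 1) + 1 := by ring
    rw [this, Finset.sum_range_succ, Finset.sum_range_succ, Finset.sum_range_succ, ih]
    rw [← h n]
    ring

lemma eval_aux (c : ℕ → ℝ) (m j : ℕ) (hj : j ≤ 2 ^ m) :
    (∑ i ∈ Finset.range (min ⌊((j:ℝ)/2^m) * 2 ^ m⌋₊ (2 ^ m - 1)), c i) +
      2 ^ m * c (min ⌊((j:ℝ)/2^m) * 2 ^ m⌋₊ (2 ^ m - 1)) *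
        (((j:ℝ)/2^m) - (min ⌊((j:ℝ)/2^m) * 2 ^ m⌋₊ (2 ^ m - 1) : ℕ) / 2 ^ m) =
    ∑ i ∈ Finset.range j, c i := by
  have hpow : (0:ℝ) < 2 ^ m := by positivity
  have ht : ((j:ℝ)/2^m) * 2 ^ m = (j : ℝ) := by field_simp
  rw [ht, Nat.floor_natCast]
  rcases eq_or_lt_of_le hj with he | hlt
  · have hmin : min j (2 ^ m - 1) = 2 ^ m - 1 := by omega
    rw [hmin]
    have h2 : (1:ℕ) ≤ 2 ^ m := Nat.one_le_two_pow
    have hsucc : 2 ^ m = (2 ^ m - 1) + 1 := by omega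
    have hje : j = (2 ^ m - 1) + 1 := by omega
    rw [hje, Finset.sum_range_succ]
    have hcast : ((2 ^ m - 1 : ℕ) : ℝ) = (2 : ℝ) ^ m - 1 := by
      push_cast [h2]; ring
    rw [hcast]
    push_cast
    field_simp
    rw [hcast]
    ring
  · have hmin : min j (2 ^ m - 1) = j := by omega
    rw [hmin]
    simp

lemma xfun_eval (α : ℝ) (m j : ℕ) (hj : j ≤ 2 ^ m) :
    xfun α m ((j:ℝ)/2^m) = ∑ i ∈ Finset.range j, fcoef α m i := by
  unfold xfun
  exact eval_aux (fcoef α m) m j hj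

lemma yfun_eval (α : ℝ) (m j : ℕ) (hj : j ≤ 2 ^ m) :
    yfun α m ((j:ℝ)/2^m) = ∑ i ∈ Finset.range j, gcoef α m i := by
  unfold yfun
  exact eval_aux (gcoef α m) m j hj

theorem stmt6 (α : ℝ) (hα0 : 0 < α) (hα1 : α < π / 3) :
    ∀ k : ℕ, 1 ≤ k → ∀ l : ℕ, 1 ≤ l → ∀ j : ℕ, 1 ≤ j → j ≤ 2 ^ k →
      xfun α (k + l) ((j : ℝ) / 2 ^ k) = xfun α k ((j : ℝ) / 2 ^ k) ∧
      yfun α (k + l) ((j : ℝ) / 2 ^ k) = yfun α k ((j : ℝ) / 2 ^ k) ∧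
      xfun α k ((j : ℝ) / 2 ^ k) = ∑ i ∈ Finset.range j, fcoef α k i := by
  have hc : Real.cos α ≠ 0 := by
    have hpi := Real.pi_pos
    exact ne_of_gt (Real.cos_pos_of_mem_Ioo ⟨by linarith, by linarith⟩)
  intro k hk l hl j hj1 hj2
  have hfsum : ∀ l : ℕ, ∑ i ∈ Finset.range (j * 2 ^ l), fcoef α (k + l) i =
      ∑ i ∈ Finset.range j, fcoef α k i := by
    intro l
    induction l with
    | zero => simp
    | succ n ih =>
      have h1 : j * 2 ^ (n+1) = 2 * (j * 2 ^ n) := by ring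
      have h2 : k + (n+1) = (k + n) + 1 := by ring
      rw [h1, h2, sum_double (fcoef α (k+n)) (fcoef α (k+n+1)) (fpair α hc (k+n)) (j * 2^n), ih]
  have hgsum : ∀ l : ℕ, ∑ i ∈ Finset.range (j * 2 ^ l), gcoef α (k + l) i =
      ∑ i ∈ Finset.range j, gcoef α k i := by
    intro l
    induction l with
    | zero => simp
    | succ n ih =>
      have h1 : j * 2 ^ (n+1) = 2 * (j * 2 ^ n) := by ring
      have h2 : k + (n+1) = (k + n) + 1 := by ring
      rw [h1, h2, sum_double (gcoef α (k+n)) (gcoef α (k+n+1)) (gpair α hc (k+n)) (j * 2^n), ih]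
  have hteq : (j : ℝ) / 2 ^ k = ((j * 2 ^ l : ℕ) : ℝ) / 2 ^ (k + l) := by
    push_cast
    rw [pow_add]
    field_simp
  have hle : j * 2 ^ l ≤ 2 ^ (k + l) := by
    rw [pow_add]
    exact Nat.mul_le_mul_right _ hj2
  refine ⟨?_, ?_, xfun_eval α k j hj2⟩
  · rw [hteq, xfun_eval α (k+l) (j * 2^l) hle, hfsum l, ← xfun_eval α k j hj2, hteq]
  · rw [hteq, yfun_eval α (k+l) (j * 2^l) hle, hgsum l, ← yfun_eval α k j hj2, hteq]
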